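/- Let s be a positive integer, ζ_s a primitive s-th root of unity, and h(q) = ∑_{i=0}^{s-1} q^i A_s(i,q^s) a polynomial over ℂ. Then for every ℓ ≥ 0 and every i₀ ∈ {0,...,s-1}: ∑_{j=0}^{ℓ} C_{ℓ,i₀,j}(s) q^{i₀+js} A_s^{(j)}(i₀, q^s) = (1/s) ∑_{k=0}^{s-1} ζ_s^{-k i₀} [(q·d/dq)^ℓ h](ζ_s^k q). -/
import Mathlib


open Polynomial Finset

/-- The triangular integer array `C_{ℓ,i,j}(s)`: `C_{0,0,0}=1`, `C_{ℓ,i,0}=i^ℓ`,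
`C_{ℓ,i,j}=0` for `j > ℓ` or `j < 0`, and
`C_{ℓ+1,i,j} = (i+js)·C_{ℓ,i,j} + s·C_{ℓ,i,j-1}`. -/
def Carr (s i : ℤ) : ℕ → ℤ → ℤ
  | 0, j => if j = 0 then 1 else 0
  | (ℓ + 1), j =>
      if j < 0 ∨ (ℓ : ℤ) + 1 < j then 0
      else if j = 0 then i ^ (ℓ + 1)
      else (i + j * s) * Carr s i ℓ j + s * Carr s i ℓ (j - 1)

lemma Carr_j_zero (s i : ℤ) (ℓ : ℕ) : Carr s i ℓ 0 = i ^ ℓ := by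
  cases ℓ with
  | zero => simp [Carr.eq_1]
  | succ n =>
    rw [Carr.eq_2, if_neg (by push_neg; constructor <;> omega), if_pos rfl]

lemma Carr_neg (s i : ℤ) (ℓ : ℕ) (j : ℤ) (hj : j < 0) : Carr s i ℓ j = 0 := by
  cases ℓ with
  | zero => rw [Carr.eq_1, if_neg (by omega)]
  | succ n => rw [Carr.eq_2, if_pos (Or.inl hj)]

lemma Carr_gt (s i : ℤ) (ℓ : ℕ) (j : ℤ) (hj : (ℓ : ℤ) < j) : Carr s i ℓ j = 0 := by
  cases ℓ with
  | zero => rw [Carr.eq_1, if_neg (by omega)]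
  | succ n => rw [Carr.eq_2, if_pos (Or.inr (by push_cast; omega))]

lemma Carr_succ (s i : ℤ) (ℓ : ℕ) (j : ℤ) (hj : 0 ≤ j) :
    Carr s i (ℓ + 1) j = (i + j * s) * Carr s i ℓ j + s * Carr s i ℓ (j - 1) := by
  by_cases h1 : (ℓ : ℤ) + 1 < j
  · rw [Carr_gt _ _ _ _ (by push_cast; omega), Carr_gt _ _ _ _ (by omega),
      Carr_gt _ _ _ _ (by omega)]
    ring
  · by_cases h0 : j = 0
    · subst h0
      rw [Carr_j_zero, Carr_j_zero, Carr_neg _ _ _ _ (by omega)]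
      ring
    · rw [Carr.eq_2, if_neg (by push_neg; constructor <;> omega), if_neg h0]

lemma theta_term (s : ℕ) (hs : 1 ≤ s) (m : ℕ) (B : ℂ[X]) :
    X * derivative (X ^ m * B.comp (X ^ s)) =
      C (m : ℂ) * (X ^ m * B.comp (X ^ s)) +
      C (s : ℂ) * (X ^ (m + s) * (derivative B).comp (X ^ s)) := by
  obtain ⟨t, rfl⟩ := Nat.exists_eq_add_of_le hs
  rw [derivative_mul, derivative_comp, derivative_X_pow, derivative_X_pow]
  simp only [Nat.add_sub_cancel_left, show 1 + t - 1 = t from by omega]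
  cases m with
  | zero => simp; ring
  | succ n =>
    simp only [Nat.succ_sub_one]
    push_cast
    ring

lemma theta_sum {ι : Type*} (t : Finset ι) (f : ι → ℂ[X]) (ℓ : ℕ) :
    (fun g : ℂ[X] => X * derivative g)^[ℓ] (∑ i ∈ t, f i) =
      ∑ i ∈ t, (fun g : ℂ[X] => X * derivative g)^[ℓ] (f i) := by
  induction ℓ generalizing f with
  | zero => simp
  | succ n ih =>
    rw [Function.iterate_succ_apply]
    rw [show X * derivative (∑ i ∈ t, f i) =
        ∑ i ∈ t, X * derivative (f i) by simp [derivative_sum, Finset.mul_sum]]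
    rw [ih fun i => X * derivative (f i)]
    exact Finset.sum_congr rfl fun i _ => (Function.iterate_succ_apply _ n _).symm

lemma comp_scale (s : ℕ) (a : ℂ) (ha : a ^ s = 1) (c : ℂ) (m : ℕ) (B : ℂ[X]) :
    (C c * X ^ m * B.comp (X ^ s)).comp (C a * X) =
      C (c * a ^ m) * X ^ m * B.comp (X ^ s) := by
  rw [mul_comp, mul_comp, C_comp, pow_comp, X_comp, comp_assoc, pow_comp, X_comp,
    mul_pow (C a) X s, ← C_pow, ha, map_one, one_mul, mul_pow (C a) X m, ← C_pow,
    map_mul]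
  ring

lemma root_sum (s : ℕ) (hs : 1 ≤ s) (ζ : ℂ) (hζ : IsPrimitiveRoot ζ s)
    (i i₀ : ℕ) (hi : i < s) (hi₀ : i₀ < s) :
    ∑ k ∈ Finset.range s, ζ ^ ((k : ℤ) * ((i : ℤ) - (i₀ : ℤ))) =
      if i = i₀ then (s : ℂ) else 0 := by
  by_cases h : i = i₀
  · subst h; simp
  · rw [if_neg h]
    have hne : ζ ^ ((i : ℤ) - (i₀ : ℤ)) ≠ 1 := by
      intro hone
      rw [hζ.zpow_eq_one_iff_dvd] at hone
      have h0 : (i : ℤ) - (i₀ : ℤ) = 0 :=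
        Int.eq_zero_of_abs_lt_dvd hone (by rw [abs_lt]; constructor <;> omega)
      omega
    have hpow : ∀ k : ℕ, ζ ^ ((k : ℤ) * ((i : ℤ) - (i₀ : ℤ))) =
        (ζ ^ ((i : ℤ) - (i₀ : ℤ))) ^ k := by
      intro k
      rw [← zpow_natCast (ζ ^ ((i:ℤ) - i₀)) k, ← zpow_mul, mul_comm]
    simp only [hpow]
    rw [geom_sum_eq hne]
    have : (ζ ^ ((i : ℤ) - (i₀ : ℤ))) ^ s = 1 := by
      rw [← zpow_natCast, ← zpow_mul, mul_comm, zpow_mul, zpow_natCast, hζ.pow_eq_one,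
        one_zpow]
    rw [this, sub_self, zero_div]

lemma theta_iter (s : ℕ) (hs : 1 ≤ s) (i : ℕ) (A : ℂ[X]) (ℓ : ℕ) :
    (fun g : ℂ[X] => X * derivative g)^[ℓ] (X ^ i * A.comp (X ^ s)) =
      ∑ j ∈ Finset.range (ℓ + 1),
        C ((Carr (s : ℤ) (i : ℤ) ℓ (j : ℤ) : ℂ)) * X ^ (i + j * s) *
          (derivative^[j] A).comp (X ^ s) := by
  induction ℓ with
  | zero => simp [Carr_j_zero]
  | succ n ih =>
    rw [Function.iterate_succ_apply', ih, derivative_sum, Finset.mul_sum]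
    have step : ∀ j : ℕ,
        X * derivative (C ((Carr (s:ℤ) (i:ℤ) n (j:ℤ) : ℂ)) * X ^ (i + j * s) *
            (derivative^[j] A).comp (X ^ s)) =
          C ((Carr (s:ℤ) (i:ℤ) n (j:ℤ) : ℂ)) * C ((i + j * s : ℕ) : ℂ) *
            (X ^ (i + j * s) * (derivative^[j] A).comp (X ^ s)) +
          C ((Carr (s:ℤ) (i:ℤ) n (j:ℤ) : ℂ)) * C (s : ℂ) *
            (X ^ (i + (j + 1) * s) * (derivative^[j+1] A).comp (X ^ s)) := by
      intro j
      rw [mul_assoc, derivative_C_mul, mul_left_comm X,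
        theta_term s hs (i + j * s) (derivative^[j] A)]
      rw [Function.iterate_succ_apply', show i + (j+1)*s = i + j*s + s from by ring]
      ring
    simp only [step]
    rw [Finset.sum_add_distrib]
    -- now RHS side: split using Carr_succ
    have key : ∀ j ∈ Finset.range (n + 2),
        C ((Carr (s:ℤ) (i:ℤ) (n+1) (j:ℤ) : ℂ)) * X ^ (i + j * s) *
          (derivative^[j] A).comp (X ^ s) =
        (C ((Carr (s:ℤ) (i:ℤ) n (j:ℤ) : ℂ)) * C (((i:ℤ) + j * s : ℤ) : ℂ) *
            (X ^ (i + j * s) * (derivative^[j] A).comp (X ^ s)) +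
         C ((s:ℤ) : ℂ) * C ((Carr (s:ℤ) (i:ℤ) n ((j:ℤ) - 1) : ℂ)) *
            (X ^ (i + j * s) * (derivative^[j] A).comp (X ^ s))) := by
      intro j _
      rw [Carr_succ _ _ _ _ (by positivity), Int.cast_add, Int.cast_mul,
        Int.cast_mul, map_add, map_mul, map_mul]
      push_cast
      ring
    rw [Finset.sum_congr rfl key, Finset.sum_add_distrib]
    congr 1
    · conv_rhs => rw [Finset.sum_range_succ]
      rw [Carr_gt (s:ℤ) (i:ℤ) n ((n+1 : ℕ) : ℤ) (by push_cast; omega)]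
      simp only [Int.cast_zero, map_zero, zero_mul, mul_zero, add_zero]
      refine Finset.sum_congr rfl fun j _ => ?_
      push_cast
      ring
    · conv_rhs => rw [Finset.sum_range_succ']
      rw [show ((0:ℕ):ℤ) - 1 = -1 from by norm_num,
        Carr_neg (s:ℤ) (i:ℤ) n (-1) (by omega)]
      simp only [Int.cast_zero, map_zero, mul_zero, zero_mul, add_zero]
      refine Finset.sum_congr rfl fun j _ => ?_
      rw [show ((j + 1 : ℕ) : ℤ) - 1 = (j : ℤ) from by push_cast; ring]
      push_cast
      ring

lemma smul_C_mul_eq (a b d e : ℂ) (p : ℂ[X]) (h : a * b = d * e) :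
    a • (C b * p) = d • (C e * p) := by
  rw [smul_eq_C_mul, smul_eq_C_mul, ← mul_assoc, ← mul_assoc, ← map_mul, ← map_mul, h]

theorem euler_operator_dissection_extraction (s : ℕ) (hs : 1 ≤ s) (ζ : ℂ)
    (hζ : IsPrimitiveRoot ζ s) (A : ℕ → ℂ[X]) (ℓ : ℕ) (i₀ : ℕ) (hi₀ : i₀ < s) :
    ∑ j ∈ Finset.range (ℓ + 1),
        C ((Carr (s : ℤ) (i₀ : ℤ) ℓ (j : ℤ) : ℂ)) * X ^ (i₀ + j * s) *
          (derivative^[j] (A i₀)).comp (X ^ s) =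
      (s : ℂ)⁻¹ •
        ∑ k ∈ Finset.range s, ζ ^ (-((k : ℤ) * i₀)) •
          ((fun g : ℂ[X] => X * derivative g)^[ℓ]
              (∑ i ∈ Finset.range s, X ^ i * (A i).comp (X ^ s))).comp
            (C (ζ ^ k) * X) := by
  have hζs : ζ ^ s = 1 := hζ.pow_eq_one
  have hζ0 : ζ ≠ 0 := hζ.ne_zero (by omega)
  have hk : ∀ k ∈ Finset.range s,
      ζ ^ (-((k : ℤ) * i₀)) •
        ((fun g : ℂ[X] => X * derivative g)^[ℓ]
            (∑ i ∈ Finset.range s, X ^ i * (A i).comp (X ^ s))).comp (C (ζ ^ k) * X) =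
      ∑ i ∈ Finset.range s, ∑ j ∈ Finset.range (ℓ + 1),
        ζ ^ ((k : ℤ) * ((i : ℤ) - (i₀ : ℤ))) •
          (C ((Carr (s : ℤ) (i : ℤ) ℓ (j : ℤ) : ℂ)) * X ^ (i + j * s) *
            (derivative^[j] (A i)).comp (X ^ s)) := by
    intro k _
    have hak : (ζ ^ k) ^ s = 1 := by
      rw [← pow_mul, mul_comm, pow_mul, hζs, one_pow]
    rw [theta_sum, Finset.sum_congr rfl fun i _ => theta_iter s hs i (A i) ℓ,
      Polynomial.sum_comp]
    rw [Finset.sum_congr rfl fun i _ => Polynomial.sum_comp (Finset.range (ℓ+1)) _ _]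
    rw [Finset.sum_congr rfl fun i _ => Finset.sum_congr rfl fun j _ =>
      comp_scale s (ζ ^ k) hak _ _ _]
    rw [Finset.smul_sum]
    refine Finset.sum_congr rfl fun i _ => ?_
    rw [Finset.smul_sum]
    refine Finset.sum_congr rfl fun j _ => ?_
    have h1 : (ζ ^ k) ^ (i + j * s) = ζ ^ (k * i) := by
      rw [← pow_mul, show k * (i + j * s) = k * i + s * (k * j) from by ring,
        pow_add, pow_mul ζ s (k * j), hζs, one_pow, mul_one]
    have h2 : ζ ^ (-((k : ℤ) * i₀)) * ζ ^ (k * i) = ζ ^ ((k : ℤ) * ((i : ℤ) - i₀)) := by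
      rw [← zpow_natCast ζ (k * i), ← zpow_add₀ hζ0]
      congr 1
      push_cast
      ring
    rw [mul_assoc, mul_assoc]
    refine smul_C_mul_eq _ _ _ _ _ ?_
    rw [h1, mul_left_comm, h2]
    exact mul_comm _ _
  rw [Finset.sum_congr rfl hk, Finset.sum_comm]
  rw [Finset.sum_congr rfl fun i _ => Finset.sum_comm]
  have hinner : ∀ i ∈ Finset.range s, ∀ j ∈ Finset.range (ℓ + 1),
      ∑ k ∈ Finset.range s,
        ζ ^ ((k : ℤ) * ((i : ℤ) - (i₀ : ℤ))) •
          (C ((Carr (s : ℤ) (i : ℤ) ℓ (j : ℤ) : ℂ)) * X ^ (i + j * s) *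
            (derivative^[j] (A i)).comp (X ^ s)) =
      if i = i₀ then
        (s : ℂ) • (C ((Carr (s : ℤ) (i : ℤ) ℓ (j : ℤ) : ℂ)) * X ^ (i + j * s) *
            (derivative^[j] (A i)).comp (X ^ s))
      else 0 := by
    intro i hi j _
    rw [← Finset.sum_smul, root_sum s hs ζ hζ i i₀ (Finset.mem_range.mp hi) hi₀]
    split_ifs <;> simp
  rw [Finset.sum_congr rfl fun i hi => Finset.sum_congr rfl (hinner i hi)]
  have hout : ∀ i ∈ Finset.range s,
      (∑ j ∈ Finset.range (ℓ + 1),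
        if i = i₀ then
          (s : ℂ) • (C ((Carr (s : ℤ) (i : ℤ) ℓ (j : ℤ) : ℂ)) * X ^ (i + j * s) *
              (derivative^[j] (A i)).comp (X ^ s))
        else 0) =
      if i = i₀ then
        ∑ j ∈ Finset.range (ℓ + 1),
          (s : ℂ) • (C ((Carr (s : ℤ) (i : ℤ) ℓ (j : ℤ) : ℂ)) * X ^ (i + j * s) *
              (derivative^[j] (A i)).comp (X ^ s))
      else 0 := by
    intro i _
    split_ifs <;> simp
  rw [Finset.sum_congr rfl hout, Finset.sum_ite_eq' (Finset.range s) i₀,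
    if_pos (Finset.mem_range.mpr hi₀), ← Finset.smul_sum, smul_smul,
    inv_mul_cancel₀ (Nat.cast_ne_zero.mpr (by omega) : (s : ℂ) ≠ 0), one_smul]
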